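/- arXiv:0909.5033 — 4 statements merged into one kernel-verified Lean document; each statement's English description precedes it below -/
import Mathlib

section
/- Let M be a matroid and let N be a minor of M. Then for every cocircuit C_N of N there exists a cocircuit C_M of M such that the matroid N\C_N (N with C_N deleted) is a minor of the matroid M\C_M (M with C_M deleted). -/
/-! Common definitions for formalizing "On the Interplay between Graphic and
Cographic Matroids with Graphic Cocircuits" (arXiv:0909.5033). -/

section MatroidDefs

variable {α β : Type*}

/-- Deletion of a set of elements from a matroid: `M \ D`. -/
def mDel (M : Matroid α) (D : Set α) : Matroid α := M.restrict (M.E \ D)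

/-- Contraction of a set of elements in a matroid: `M / C = (M✶ \ C)✶`. -/
def mCon (M : Matroid α) (C : Set α) : Matroid α := (mDel M✶ C)✶

/-- `MinorOf N M` means `N` can be obtained from `M` by a sequence of deletions
and contractions. -/
inductive MinorOf : Matroid α → Matroid α → Prop
  | refl (M : Matroid α) : MinorOf M M
  | del {N M : Matroid α} (D : Set α) : MinorOf N M → MinorOf (mDel N D) M
  | con {N M : Matroid α} (C : Set α) : MinorOf N M → MinorOf (mCon N C) M

/-- `C` is a circuit of the matroid `M`: a minimal dependent set. -/
def IsCircuitOf (M : Matroid α) (C : Set α) : Prop :=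
  M.Dep C ∧ ∀ D, D ⊂ C → M.Indep D

/-- `C` is a cocircuit of `M`: a circuit of the dual matroid. -/
def IsCocircuitOf (M : Matroid α) (C : Set α) : Prop := IsCircuitOf M✶ C

/-- Matroid isomorphism: a bijection between the ground sets preserving independence. -/
def MatroidIso (M : Matroid α) (N : Matroid β) : Prop :=
  ∃ f : α → β, Set.BijOn f M.E N.E ∧ ∀ I ⊆ M.E, (M.Indep I ↔ N.Indep (f '' I))

/-- `M` has a minor isomorphic to `N`. -/
def HasMinorIso (M : Matroid α) (N : Matroid β) : Prop :=
  ∃ M₀ : Matroid α, MinorOf M₀ M ∧ MatroidIso M₀ N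

/-- A matroid is simple if it has no circuits of size one or two. -/
def IsSimpleMatroid (M : Matroid α) : Prop :=
  ∀ C, IsCircuitOf M C → C.ncard ≠ 1 ∧ C.ncard ≠ 2

/-- A `k`-separation of a matroid (rank condition phrased via bases of the two sides,
which all have the same cardinality): `r(X) + r(Y) - r(M) ≤ k - 1`. -/
def MatroidKSeparation (M : Matroid α) (k : ℕ) : Prop :=
  ∃ X Y : Set α, X ∪ Y = M.E ∧ Disjoint X Y ∧ k ≤ X.ncard ∧ k ≤ Y.ncard ∧
    ∀ I J B, M.IsBasis I X → M.IsBasis J Y → M.IsBase B →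
      I.ncard + J.ncard + 1 ≤ B.ncard + k

/-- A matroid is 3-connected if it has no 1-separation and no 2-separation. -/
def MatroidThreeConnected (M : Matroid α) : Prop :=
  ¬ MatroidKSeparation M 1 ∧ ¬ MatroidKSeparation M 2

/-- Representability of a matroid over a field `F`. -/
def IsRepresentableOver (M : Matroid α) (F : Type) [Field F] : Prop :=
  ∃ (n : ℕ) (φ : α → (Fin n → F)), ∀ I, I ⊆ M.E →
    (M.Indep I ↔ LinearIndependent F (fun x : I => φ x))

/-- A matroid is regular if it is representable over every field. -/
def IsRegularMatroid (M : Matroid α) : Prop :=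
  ∀ (F : Type) [Field F], IsRepresentableOver M F

end MatroidDefs

section GraphDefs

variable {V W : Type*}

/-- A circle of a graph: the edge set of a cycle. -/
def IsGraphCircle (G : SimpleGraph V) (X : Set (Sym2 V)) : Prop :=
  ∃ (u : V) (c : G.Walk u u), c.IsCycle ∧ X = {e | e ∈ c.edges}

/-- The contraction `G/X` of a set of edges `X` in a graph `G`: vertices are the
connected components of the subgraph formed by the edges of `X`, and distinct
components are adjacent if `G` has an edge outside `X` joining them. -/
def contractGraph (G : SimpleGraph V) (X : Set (Sym2 V)) :
    SimpleGraph (SimpleGraph.fromEdgeSet X ⊓ G).ConnectedComponent :=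
  SimpleGraph.fromRel fun a b => ∃ u v : V, G.Adj u v ∧ s(u, v) ∉ X ∧
    a = (SimpleGraph.fromEdgeSet X ⊓ G).connectedComponentMk u ∧
    b = (SimpleGraph.fromEdgeSet X ⊓ G).connectedComponentMk v

/-- `G` has a minor isomorphic to `H` (branch-set/minor-model definition). -/
def HasGraphMinor (G : SimpleGraph V) (H : SimpleGraph W) : Prop :=
  ∃ φ : W → Set V,
    (∀ w, (φ w).Nonempty) ∧
    (∀ w, ((G.induce (φ w)).Connected)) ∧
    (Pairwise fun w₁ w₂ => Disjoint (φ w₁) (φ w₂)) ∧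
    ∀ ⦃w₁ w₂⦄, H.Adj w₁ w₂ → ∃ v₁ ∈ φ w₁, ∃ v₂ ∈ φ w₂, G.Adj v₁ v₂

/-- The degree of a vertex, as the cardinality of its neighbour set. -/
noncomputable def vDeg (G : SimpleGraph V) (v : V) : ℕ := (G.neighborSet v).ncard

/-- The set of end-vertices of a set of edges. -/
def edgeEndpoints (A : Set (Sym2 V)) : Set V := {v | ∃ e ∈ A, v ∈ e}

/-- A Tutte `k`-separation of a graph: a partition `(A, B)` of the edge set with
`min(|A|,|B|) ≥ k` and exactly `k` vertices in common between `G[A]` and `G[B]`. -/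
def GraphKSeparation (G : SimpleGraph V) (k : ℕ) : Prop :=
  ∃ A B : Set (Sym2 V), A ∪ B = G.edgeSet ∧ Disjoint A B ∧
    k ≤ A.ncard ∧ k ≤ B.ncard ∧ (edgeEndpoints A ∩ edgeEndpoints B).ncard = k

/-- Tutte 3-connectivity of a graph. -/
def GraphThreeConnected (G : SimpleGraph V) : Prop :=
  G.Connected ∧ ¬ GraphKSeparation G 1 ∧ ¬ GraphKSeparation G 2

/-- `M` is the cycle matroid of the graph `G`: the ground set is the edge set of `G`
and the circuits are exactly the circles (edge sets of cycles) of `G`. -/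
def IsCycleMatroidOf (M : Matroid (Sym2 V)) (G : SimpleGraph V) : Prop :=
  M.E = G.edgeSet ∧ ∀ C, IsCircuitOf M C ↔ IsGraphCircle G C

/-- A matroid is graphic if it is isomorphic to the cycle matroid of some graph. -/
def IsGraphicMatroid {α : Type*} (M : Matroid α) : Prop :=
  ∃ (V : Type) (G : SimpleGraph V) (N : Matroid (Sym2 V)),
    IsCycleMatroidOf N G ∧ MatroidIso M N

/-- A matroid is cographic if its dual is graphic. -/
def IsCographicMatroid {α : Type*} (M : Matroid α) : Prop := IsGraphicMatroid M✶

/-- Operation O2 data at a vertex `v`: a partition of the neighbours of `v`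
(of degree at least 4) into two parts of size at least two each (so that both new
vertices have degree greater than 2). -/
def IsO2Partition (G : SimpleGraph V) (v : V) (S₁ S₂ : Set V) : Prop :=
  4 ≤ (G.neighborSet v).ncard ∧ S₁ ∪ S₂ = G.neighborSet v ∧ Disjoint S₁ S₂ ∧
    2 ≤ S₁.ncard ∧ 2 ≤ S₂.ncard

/-- The graph obtained from `G` by operation O2 at `v`, with neighbour partition
`(S₁, S₂)` : the vertex `some v` plays the role of `v₁`, the new vertex `none`
plays the role of `v₂`, and `v₁`, `v₂` are adjacent. -/
def o2Graph (G : SimpleGraph V) (v : V) (S₁ S₂ : Set V) : SimpleGraph (Option V) :=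
  SimpleGraph.fromRel fun a b =>
    (∃ u w, u ≠ v ∧ w ≠ v ∧ G.Adj u w ∧ a = some u ∧ b = some w) ∨
    (∃ u, u ∈ S₁ ∧ a = some v ∧ b = some u) ∨
    (∃ u, u ∈ S₂ ∧ a = none ∧ b = some u) ∨
    (a = some v ∧ b = none)

end GraphDefs

section NamedGraphs

/-- The complete graph `K₅`. -/
def K5 : SimpleGraph (Fin 5) := SimpleGraph.completeGraph (Fin 5)

/-- The complete bipartite graph `K₃,₃`. -/
def K33 : SimpleGraph (Fin 3 ⊕ Fin 3) := completeBipartiteGraph (Fin 3) (Fin 3)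

/-- The complete bipartite graph `K₃,₅`. -/
def K35 : SimpleGraph (Fin 3 ⊕ Fin 5) := completeBipartiteGraph (Fin 3) (Fin 5)

/-- The complete bipartite graph `K₄,₄`. -/
def K44 : SimpleGraph (Fin 4 ⊕ Fin 4) := completeBipartiteGraph (Fin 4) (Fin 4)

/-- `K₄,₄` minus an edge. -/
def K44minus : SimpleGraph (Fin 4 ⊕ Fin 4) :=
  K44.deleteEdges {s(Sum.inl 0, Sum.inr 0)}

/-- The complete bipartite graph `K₃,ₙ`, with side `A` of size 3 and side `B` of size `n`. -/
def K3n (n : ℕ) : SimpleGraph (Fin 3 ⊕ Fin n) := completeBipartiteGraph (Fin 3) (Fin n)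

/-- `K₃,ₙ` plus one edge inside the side `A`. -/
def K3nPlus1 (n : ℕ) : SimpleGraph (Fin 3 ⊕ Fin n) :=
  K3n n ⊔ SimpleGraph.fromEdgeSet {s(Sum.inl 0, Sum.inl 1)}

/-- `K₃,ₙ` plus two edges inside the side `A`. -/
def K3nPlus2 (n : ℕ) : SimpleGraph (Fin 3 ⊕ Fin n) :=
  K3n n ⊔ SimpleGraph.fromEdgeSet {s(Sum.inl 0, Sum.inl 1), s(Sum.inl 0, Sum.inl 2)}

/-- `K₃,ₙ` plus all three edges inside the side `A`. -/
def K3nPlus3 (n : ℕ) : SimpleGraph (Fin 3 ⊕ Fin n) :=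
  K3n n ⊔ SimpleGraph.fromEdgeSet
    {s(Sum.inl 0, Sum.inl 1), s(Sum.inl 0, Sum.inl 2), s(Sum.inl 1, Sum.inl 2)}

/-- The family `{K₃,ₙ, K₃,ₙ⁺¹, K₃,ₙ⁺², K₃,ₙ⁺³}`. -/
def K3nFamily (n : ℕ) : Set (SimpleGraph (Fin 3 ⊕ Fin n)) :=
  {K3n n, K3nPlus1 n, K3nPlus2 n, K3nPlus3 n}

end NamedGraphs

section SignedGraphs

variable {V : Type*}

/-- The number of negative edges of a walk, for a sign function `σ`
(`σ e = false` meaning that `e` is negative). -/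
def negCount (σ : Sym2 V → Bool) {G : SimpleGraph V} {u v : V} (c : G.Walk u v) : ℕ :=
  (c.edges.filter fun e => !σ e).length

/-- Circuits of a signed graph `(G, σ)`: a positive cycle; or two negative cycles
meeting in exactly one vertex; or two vertex-disjoint negative cycles joined by a
path meeting the cycles only in its end vertices. -/
def IsSignedCircuit (G : SimpleGraph V) (σ : Sym2 V → Bool) (C : Set (Sym2 V)) : Prop :=
  (∃ (u : V) (c : G.Walk u u), c.IsCycle ∧ Even (negCount σ c) ∧
      C = {e | e ∈ c.edges}) ∨
  (∃ (w : V) (c₁ c₂ : G.Walk w w), c₁.IsCycle ∧ c₂.IsCycle ∧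
      Odd (negCount σ c₁) ∧ Odd (negCount σ c₂) ∧
      {x | x ∈ c₁.support} ∩ {x | x ∈ c₂.support} = {w} ∧
      C = {e | e ∈ c₁.edges} ∪ {e | e ∈ c₂.edges}) ∨
  (∃ (u v : V) (c₁ : G.Walk u u) (c₂ : G.Walk v v) (p : G.Walk u v),
      c₁.IsCycle ∧ c₂.IsCycle ∧ p.IsPath ∧
      Odd (negCount σ c₁) ∧ Odd (negCount σ c₂) ∧
      {x | x ∈ c₁.support} ∩ {x | x ∈ c₂.support} = ∅ ∧
      {x | x ∈ p.support} ∩ {x | x ∈ c₁.support} = {u} ∧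
      {x | x ∈ p.support} ∩ {x | x ∈ c₂.support} = {v} ∧
      C = {e | e ∈ c₁.edges} ∪ {e | e ∈ c₂.edges} ∪ {e | e ∈ p.edges})

/-- `M` is the signed-graphic matroid of the signed graph `(G, σ)`. -/
def IsSignedGraphicMatroidOf (M : Matroid (Sym2 V)) (G : SimpleGraph V)
    (σ : Sym2 V → Bool) : Prop :=
  M.E = G.edgeSet ∧ ∀ C, IsCircuitOf M C ↔ IsSignedCircuit G σ C

/-- A matroid is signed-graphic if it is isomorphic to the matroid of some signed graph. -/
def IsSignedGraphicMatroid {α : Type*} (M : Matroid α) : Prop :=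
  ∃ (V : Type) (G : SimpleGraph V) (σ : Sym2 V → Bool) (N : Matroid (Sym2 V)),
    IsSignedGraphicMatroidOf N G σ ∧ MatroidIso M N

end SignedGraphs

section Statement0Aux

open Set Matroid

variable {α : Type*} {M : Matroid α}

lemma mDel_eq_restrict (M : Matroid α) (D : Set α) : mDel M D = M ↾ (M.E \ D) := rfl

lemma mDel_ground (M : Matroid α) (D : Set α) : (mDel M D).E = M.E \ D := rfl

lemma mCon_ground (M : Matroid α) (K : Set α) : (mCon M K).E = M.E \ K := rfl

lemma mCon_dual (M : Matroid α) (K : Set α) : (mCon M K)✶ = mDel M✶ K := by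
  rw [mCon, dual_dual]

lemma mDel_indep_iff {D I : Set α} : (mDel M D).Indep I ↔ M.Indep I ∧ I ⊆ M.E \ D :=
  Matroid.restrict_indep_iff

lemma mDel_mDel (M : Matroid α) (A B : Set α) : mDel (mDel M A) B = mDel M (A ∪ B) := by
  simp only [mDel, restrict_ground_eq, diff_diff]
  exact restrict_restrict_eq _ (diff_subset_diff_right subset_union_left)

lemma mDel_inter_ground (M : Matroid α) (D : Set α) : mDel M D = mDel M (D ∩ M.E) := by
  rw [mDel_eq_restrict, mDel_eq_restrict]
  congr 1
  ext x
  simp only [mem_diff, mem_inter_iff]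
  tauto

lemma mCon_inter_ground (M : Matroid α) (K : Set α) : mCon M K = mCon M (K ∩ M.E) := by
  rw [mCon, mCon, mDel_inter_ground, dual_ground]

lemma dual_mDel_indep_iff {D X : Set α} :
    ((mDel M D)✶).Indep X ↔ X ⊆ M.E \ D ∧ ∃ B, M.IsBasis B (M.E \ D) ∧ Disjoint X B := by
  rw [mDel_eq_restrict, dual_indep_iff_exists', restrict_ground_eq]
  exact and_congr_right fun _ => exists_congr fun B =>
    and_congr_left fun _ => isBase_restrict_iff diff_subset

/-- Independence in a contraction, in terms of bases of the contracted set. -/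
lemma mCon_indep_iff {K I : Set α} (hK : K ⊆ M.E) :
    (mCon M K).Indep I ↔ I ⊆ M.E \ K ∧ ∃ J, M.IsBasis J K ∧ M.Indep (I ∪ J) := by
  have hE : M✶.E \ K = M.E \ K := by rw [dual_ground]
  rw [mCon, dual_mDel_indep_iff, hE]
  refine and_congr_right fun hIE => ⟨?_, ?_⟩
  · rintro ⟨B', hB', hdj⟩
    obtain ⟨Bs, hBs, rfl⟩ := hB'.exists_isBase
    have hBsE : Bs ⊆ M.E := hBs.subset_ground
    have hB : M.IsBase (M.E \ Bs) := hBs.compl_isBase_of_dual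
    refine ⟨(M.E \ Bs) ∩ K, ?_, hB.indep.subset ?_⟩
    · rw [hB.inter_isBasis_iff_compl_inter_isBasis_dual hK, diff_diff_cancel_left hBsE]
      exact hB'
    · refine union_subset (fun x hx => ⟨hIE hx |>.1, fun hxBs => ?_⟩) inter_subset_left
      exact hdj.ne_of_mem hx ⟨hxBs, hIE hx⟩ rfl
  · rintro ⟨J, hJ, hIJ⟩
    obtain ⟨B, hB, hss⟩ := hIJ.exists_isBase_superset
    have hJB : J = B ∩ K :=
      hJ.eq_of_subset_indep (hB.indep.inter_right K)
        (subset_inter (subset_union_right.trans hss) hJ.subset) inter_subset_right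
    refine ⟨(M.E \ B) ∩ (M.E \ K), ?_, ?_⟩
    · exact (hB.inter_isBasis_iff_compl_inter_isBasis_dual hK).1 (hJB ▸ hJ)
    · exact Disjoint.mono_right inter_subset_left <| disjoint_sdiff_right.mono_left
        (subset_union_left.trans hss)

lemma mDel_mCon_comm' {K C : Set α} (hK : K ⊆ M.E) (hC : C ⊆ M.E \ K) :
    mDel (mCon M K) C = mCon (mDel M C) K := by
  have hKE' : K ⊆ (mDel M C).E := fun x hx => ⟨hK hx, fun hxC => (hC hxC).2 hx⟩
  refine ext_indep ?_ fun I hI => ?_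
  · show ((M.E \ K) \ C) = ((M.E \ C) \ K)
    exact diff_diff_comm
  · rw [mDel_indep_iff, mCon_indep_iff hK, mCon_indep_iff hKE']
    constructor
    · rintro ⟨⟨hIE1, J, hJ, hIJ⟩, hIC⟩
      have hICne : ∀ x ∈ I, x ∉ C := fun x hx => (hIC hx).2
      refine ⟨fun x hx => ⟨⟨(hIE1 hx).1, hICne x hx⟩, (hIE1 hx).2⟩, J, ?_, ?_⟩
      · rw [mDel_eq_restrict, isBasis_restrict_iff diff_subset]
        exact ⟨hJ, hKE'⟩
      · rw [mDel_indep_iff]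
        exact ⟨hIJ, Set.union_subset (fun x hx => ⟨(hIE1 hx).1, hICne x hx⟩)
          (fun x hx => hKE' (hJ.subset hx))⟩
    · rintro ⟨hIE, J, hJ, hIJ⟩
      rw [mDel_eq_restrict, isBasis_restrict_iff diff_subset] at hJ
      rw [mDel_indep_iff] at hIJ
      exact ⟨⟨fun x hx => ⟨(hIE hx).1.1, (hIE hx).2⟩, J, hJ.1, hIJ.1⟩,
        fun x hx => ⟨⟨(hIE hx).1.1, (hIE hx).2⟩, (hIE hx).1.2⟩⟩

lemma mDel_mCon_comm {K C : Set α} (hC : C ⊆ M.E \ K) :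
    mDel (mCon M K) C = mCon (mDel M C) K := by
  have h1 : mCon M K = mCon M (K ∩ M.E) := mCon_inter_ground M K
  have hC' : C ⊆ M.E \ (K ∩ M.E) := fun x hx => ⟨(hC hx).1, fun h' => (hC hx).2 h'.1⟩
  rw [h1, mDel_mCon_comm' inter_subset_right hC', mCon_inter_ground (mDel M C) K]
  congr 1
  ext x
  simp only [mem_inter_iff, mDel_ground, mem_diff]
  exact ⟨fun h => ⟨h.1, h.2, fun hxC => (hC hxC).2 h.1⟩, fun h => ⟨h.1, h.2.1⟩⟩

lemma isCircuitOf_of_restrict {P : Matroid α} {R C : Set α} (hR : R ⊆ P.E)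
    (h : IsCircuitOf (P ↾ R) C) : IsCircuitOf P C := by
  obtain ⟨hdep, hmin⟩ := h
  rw [restrict_dep_iff] at hdep
  refine ⟨⟨hdep.1, hdep.2.trans hR⟩, fun D hD => ?_⟩
  exact ((hmin D hD).of_restrict)

/-- The key lifting lemma: a cocircuit of a deletion extends to a cocircuit of the host
matroid using only deleted elements. -/
lemma lift_cocircuit {D C : Set α} (h : IsCocircuitOf (mDel M D) C) :
    ∃ C', IsCocircuitOf M C' ∧ C ⊆ C' ∧ C' ⊆ C ∪ D := by
  set R := M.E \ D with hR
  obtain ⟨hdep, hmin⟩ := h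
  have hCR : C ⊆ R := hdep.subset_ground
  have hdep' : ¬ ∃ B, M.IsBasis B R ∧ Disjoint C B := by
    intro hex
    exact hdep.not_indep (dual_mDel_indep_iff.2 ⟨hCR, hex⟩)
  have hmin' : ∀ X, X ⊂ C → ∃ B, M.IsBasis B R ∧ Disjoint X B := by
    intro X hX
    exact (dual_mDel_indep_iff.1 (hmin X hX)).2
  obtain ⟨I, hI⟩ := M.exists_isBasis (R \ C) ((diff_subset).trans diff_subset)
  set F := M.closure (R \ C) with hF
  have hIF : M.closure I = F := hI.closure_eq_closure
  have hRF : ¬ R ⊆ F := by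
    intro hss
    refine hdep' ⟨I, ?_, ?_⟩
    · exact isBasis_iff_indep_closure.2 ⟨hI.indep, hIF ▸ hss, hI.subset.trans diff_subset⟩
    · exact disjoint_sdiff_right.mono_right hI.subset
  have hstep : ∀ c ∈ C, R ⊆ M.closure (insert c (R \ C)) := by
    intro c hc
    obtain ⟨B₀, hB₀, hdj⟩ := hmin' (C \ {c}) (sdiff_singleton_ssubset.2 hc)
    have hB₀ss : B₀ ⊆ insert c (R \ C) := by
      intro x hx
      by_cases hxC : x ∈ C
      · have : x ∉ C \ {c} := fun hmem => hdj.ne_of_mem hmem hx rfl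
        simp only [mem_diff, mem_singleton_iff, hxC, true_and, not_not] at this
        exact this ▸ mem_insert _ _
      · exact mem_insert_of_mem _ ⟨hB₀.subset hx, hxC⟩
    exact hB₀.subset_closure.trans (M.closure_subset_closure hB₀ss)
  have hCF : ∀ c ∈ C, c ∉ F := by
    intro c hc hcF
    refine hRF ((hstep c hc).trans ?_)
    rw [closure_insert_eq_of_mem_closure hcF, ← hF]
  have hCne : C.Nonempty := by
    rw [nonempty_iff_ne_empty]
    rintro rfl
    obtain ⟨B₀, hB₀⟩ := M.exists_isBasis R diff_subset
    exact hdep' ⟨B₀, hB₀, empty_disjoint _⟩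
  obtain ⟨c₀, hc₀⟩ := hCne
  have hc₀E : c₀ ∈ M.E := (hCR hc₀).1
  have hc₀I : c₀ ∉ I := fun hmem => (hI.subset hmem).2 hc₀
  have hIi : M.Indep (insert c₀ I) := by
    rw [hI.indep.insert_indep_iff_of_notMem hc₀I, hIF]
    exact ⟨hc₀E, hCF c₀ hc₀⟩
  obtain ⟨B, hB, hssB⟩ := hIi.exists_isBase_superset
  have hc₀B : c₀ ∈ B := hssB (mem_insert _ _)
  set H := M.closure (B \ {c₀}) with hH
  have hc₀H : c₀ ∉ H := hB.indep.notMem_closure_sdiff_of_mem hc₀B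
  have hIB : I ⊆ B \ {c₀} :=
    subset_diff_singleton ((subset_insert _ _).trans hssB) hc₀I
  have hFH : F ⊆ H := hIF ▸ M.closure_subset_closure hIB
  have hRCH : R \ C ⊆ H := (M.subset_closure (R \ C) ((diff_subset).trans diff_subset)).trans hFH
  have hCH : ∀ c ∈ C, c ∉ H := by
    intro c hc hcH
    have hsub : insert c (R \ C) ⊆ M.closure (B \ {c₀}) := insert_subset hcH hRCH
    exact hc₀H ((closure_subset_closure_of_subset_closure hsub) ((hstep c hc) (hCR hc₀)))
  have hHE : H ⊆ M.E := M.closure_subset_ground _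
  refine ⟨M.E \ H, ⟨⟨?_, diff_subset⟩, ?_⟩, fun x hx => ⟨(hCR hx).1, hCH x hx⟩, ?_⟩
  · -- M.E \ H is dual-dependent
    rintro ⟨-, B₀, hB₀, hdj⟩
    have hB₀H : B₀ ⊆ H := fun x hx =>
      by_contra fun hxH => hdj.ne_of_mem ⟨hB₀.subset_ground hx, hxH⟩ hx rfl
    have hHc : M.closure H = H := by rw [hH, Matroid.closure_closure]
    have : M.E ⊆ H := by
      rw [← hB₀.closure_eq, ← hHc]
      exact M.closure_subset_closure hB₀H
    exact hc₀H (this hc₀E)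
  · -- minimality
    intro X hX
    obtain ⟨f, hfC', hfX⟩ := exists_of_ssubset hX
    have hfH : f ∉ H := hfC'.2
    have hfE : f ∈ M.E := hfC'.1
    have hBH : B \ {c₀} ⊆ H := M.subset_closure _ ((diff_subset).trans hB.subset_ground)
    have hXE : X ⊆ M.E := hX.subset.trans diff_subset
    by_cases hfB : f ∈ B
    · have hfc₀ : f = c₀ := by
        by_contra hne
        exact hfH (hBH ⟨hfB, hne⟩)
      refine dual_indep_iff_exists'.2 ⟨hXE, B, hB, ?_⟩
      intro s hsX hsB x hx
      rcases eq_or_ne x c₀ with rfl | hne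
      · exact hfX (hfc₀ ▸ hsX hx)
      · exact ((hX.subset (hsX hx)).2 (hBH ⟨hsB hx, hne⟩)).elim
    · have hfBc : f ∉ B \ {c₀} := fun hmem => hfB hmem.1
      have hind : M.Indep (insert f (B \ {c₀})) := by
        rw [(hB.indep.subset diff_subset).insert_indep_iff_of_notMem hfBc]
        exact ⟨hfE, hfH⟩
      have hbase : M.IsBase (insert f (B \ {c₀})) := hB.exchange_isBase_of_indep hfB hind
      refine dual_indep_iff_exists'.2 ⟨hXE, _, hbase, ?_⟩
      intro s hsX hsB x hx
      rcases hsB hx with rfl | hmem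
      · exact hfX (hsX hx)
      · exact ((hX.subset (hsX hx)).2 (hBH hmem)).elim
  · -- M.E \ H ⊆ C ∪ D
    intro x hx
    by_contra hmem
    simp only [mem_union, not_or] at hmem
    exact hx.2 (hRCH ⟨⟨hx.1, hmem.2⟩, hmem.1⟩)

end Statement0Aux

/-- If `N` is a minor of a matroid `M` then for any cocircuit `C_N` of `N`
there exists a cocircuit `C_M` of `M` such that `N \ C_N` is a minor of `M \ C_M`. -/
theorem statement_0 {α : Type} (M N : Matroid α) (hNM : MinorOf N M)
    (C_N : Set α) (hCN : IsCocircuitOf N C_N) :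
    ∃ C_M : Set α, IsCocircuitOf M C_M ∧ MinorOf (mDel N C_N) (mDel M C_M) := by
  induction hNM generalizing C_N with
  | refl M' => exact ⟨C_N, hCN, MinorOf.refl _⟩
  | @del N₀ M₀ D h ih =>
    obtain ⟨C₁, hC₁, hsub, hsub'⟩ := lift_cocircuit hCN
    obtain ⟨C_M, hCM, hm⟩ := ih C₁ hC₁
    refine ⟨C_M, hCM, ?_⟩
    have heq : mDel (mDel N₀ D) C_N = mDel (mDel N₀ C₁) (D ∪ C_N) := by
      rw [mDel_mDel, mDel_mDel]
      congr 1
      apply Set.Subset.antisymm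
      · exact Set.subset_union_right
      · exact Set.union_subset
          (fun x hx => (hsub' hx).elim (fun h => Or.inr h) (fun h => Or.inl h))
          subset_rfl
    rw [heq]
    exact MinorOf.del _ hm
  | @con N₀ M₀ K h ih =>
    have hCsub : C_N ⊆ N₀.E \ K := by
      have := hCN.1.subset_ground
      rwa [Matroid.dual_ground, mCon_ground] at this
    have hCN' : IsCocircuitOf N₀ C_N := by
      have h2 := hCN
      unfold IsCocircuitOf at h2 ⊢
      rw [mCon_dual] at h2
      exact isCircuitOf_of_restrict Set.diff_subset h2
    obtain ⟨C_M, hCM, hm⟩ := ih C_N hCN'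
    refine ⟨C_M, hCM, ?_⟩
    rw [mDel_mCon_comm hCsub]
    exact MinorOf.con _ hm
end

section
/- Let G be K_{3,5} or K_{4,4}. For every circuit Y of the cycle matroid M(G), the contraction M(G)/Y has no minor isomorphic to M(K_5), the cycle matroid of the complete graph on five vertices. -/
/-! ### Auxiliary lemmas -/

section AuxMatroid

open Set

variable {α : Type*} {M : Matroid α}

lemma aux_mCon_ground (M : Matroid α) (C : Set α) : (mCon M C).E = M.E \ C := rfl

lemma aux_mDel_indep {D I : Set α} (h : (mDel M D).Indep I) : M.Indep I :=
  (Matroid.restrict_indep_iff.1 h).1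

lemma aux_mCon_indep_aux {Y I : Set α} (h : (mCon M Y).Indep I) :
    ∃ B', M✶.IsBase B' ∧ I ⊆ M.E \ B' ∧ M✶.IsBasis (B' ∩ (M.E \ Y)) (M.E \ Y) := by
  rw [mCon, Matroid.dual_indep_iff_exists'] at h
  obtain ⟨hIE, B, hB, hdj⟩ := h
  rw [mDel] at hB
  have hR : M.E \ Y ⊆ M✶.E := by rw [Matroid.dual_ground]; exact diff_subset
  rw [Matroid.isBase_restrict_iff] at hB
  obtain ⟨B', hB', hBB'⟩ := hB.indep.exists_isBase_superset
  have hBeq : B = B' ∩ (M.E \ Y) := by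
    refine hB.eq_of_subset_indep (hB'.indep.subset inter_subset_left)
      (subset_inter hBB' hB.subset) inter_subset_right
  refine ⟨B', hB', ?_, by rw [← hBeq]; exact hB⟩
  intro x hxI
  have hxE : x ∈ M.E := (hIE.trans hR) hxI
  refine ⟨hxE, fun hxB' => ?_⟩
  exact hdj.ne_of_mem hxI (hBeq ▸ ⟨hxB', hIE hxI⟩) rfl

lemma aux_mCon_indep {Y I : Set α} (h : (mCon M Y).Indep I) : M.Indep I := by
  obtain ⟨B', hB', hIB', -⟩ := aux_mCon_indep_aux h
  exact hB'.compl_isBase_of_dual.indep.subset hIB'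

lemma aux_mCon_indep_exists {Y I : Set α} (hY : Y ⊆ M.E) (h : (mCon M Y).Indep I) :
    ∃ J, M.IsBasis J Y ∧ M.Indep (I ∪ J) ∧ I ⊆ M.E \ Y := by
  obtain ⟨B', hB', hIB', hbasis⟩ := aux_mCon_indep_aux h
  have h2 := hB'.compl_inter_isBasis_of_inter_isBasis hbasis
  rw [Matroid.dual_dual, Matroid.dual_ground, diff_diff_cancel_left hY] at h2
  refine ⟨(M.E \ B') ∩ Y, h2, ?_, h.subset_ground⟩
  exact hB'.compl_isBase_of_dual.indep.subset (union_subset hIB' inter_subset_left)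

lemma aux_minor_ground {N M : Matroid α} (h : MinorOf N M) : N.E ⊆ M.E := by
  induction h with
  | refl => exact Subset.rfl
  | del D _ ih => exact (diff_subset.trans ih : _)
  | con C _ ih => exact (diff_subset.trans ih : _)

lemma aux_minor_indep {N M : Matroid α} (h : MinorOf N M) :
    ∀ I : Set α, N.Indep I → M.Indep I := by
  induction h with
  | refl => exact fun _ h => h
  | del D _ ih => exact fun I hI => ih I (aux_mDel_indep hI)
  | con C _ ih => exact fun I hI => ih I (aux_mCon_indep hI)

end AuxMatroid

section AuxGraph

open Set SimpleGraph

variable {V : Type*} {G : SimpleGraph V}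

lemma aux_sym2_exists (e : Sym2 V) : ∃ x y, e = s(x, y) := by
  induction e using Sym2.ind with | _ x y => exact ⟨x, y, rfl⟩

lemma aux_walk_split {a b : V} (p : G.Walk a b) {y : Sym2 V} (hy : y ∈ p.edges) :
    ∃ (u₁ u₂ : V) (h : G.Adj u₁ u₂) (p₁ : G.Walk a u₁) (p₂ : G.Walk u₂ b),
      y = s(u₁, u₂) ∧ p = p₁.append (Walk.cons h p₂) := by
  induction p with
  | nil => simp at hy
  | cons h' q ih =>
    rw [Walk.edges_cons, List.mem_cons] at hy
    rcases hy with hy | hy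
    · exact ⟨_, _, h', Walk.nil, q, hy, rfl⟩
    · obtain ⟨u₁, u₂, h, p₁, p₂, hy, hp⟩ := ih hy
      exact ⟨u₁, u₂, h, Walk.cons h' p₁, p₂, hy, by rw [Walk.cons_append, hp]⟩

lemma aux_cycle_avoid_walk {w : V} {c : G.Walk w w} (hc : c.IsCycle) {y : Sym2 V}
    (hy : y ∈ c.edges) {s₁ s₂ : V} (h₁ : s₁ ∈ c.support) (h₂ : s₂ ∈ c.support) :
    ∃ q : G.Walk s₁ s₂, q.IsPath ∧ (∀ z ∈ q.edges, z ∈ c.edges ∧ z ≠ y) ∧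
      (∀ x ∈ q.support, x ∈ c.support) := by
  classical
  obtain ⟨u₁, u₂, h, p₁, p₂, hyeq, hceq⟩ := aux_walk_split c hy
  have hedges : c.edges = p₁.edges ++ y :: p₂.edges := by
    rw [hceq, Walk.edges_append, Walk.edges_cons, hyeq]
  have hnd : c.edges.Nodup := hc.edges_nodup
  rw [hedges] at hnd
  have hy1 : y ∉ p₁.edges := fun hmem =>
    (List.disjoint_of_nodup_append hnd) hmem List.mem_cons_self
  have hy2 : y ∉ p₂.edges := by
    have := (List.nodup_append.1 hnd).2.1
    exact (List.nodup_cons.1 this).1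
  set U : G.Walk u₂ u₁ := p₂.append p₁ with hU
  have hUedges : ∀ z ∈ U.edges, z ∈ c.edges ∧ z ≠ y := by
    intro z hz
    rw [hU, Walk.edges_append, List.mem_append] at hz
    constructor
    · rw [hedges]
      rcases hz with hz | hz
      · exact List.mem_append_right _ (List.mem_cons_of_mem _ hz)
      · exact List.mem_append_left _ hz
    · rintro rfl
      rcases hz with hz | hz
      exacts [hy2 hz, hy1 hz]
  have hcsupp : ∀ x ∈ c.support, x ∈ U.support := by
    intro x hx
    rw [hceq, Walk.mem_support_append_iff] at hx
    rw [hU, Walk.mem_support_append_iff]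
    rcases hx with hx | hx
    · rw [Walk.support_eq_cons p₁, List.mem_cons] at hx
      rcases hx with rfl | hx
      · exact Or.inl p₂.end_mem_support
      · exact Or.inr (Walk.mem_support_iff _ |>.2 (Or.inr hx))
    · rw [Walk.support_cons, List.mem_cons] at hx
      rcases hx with rfl | hx
      · exact Or.inr p₁.end_mem_support
      · exact Or.inl hx
  have hUsupp : ∀ x ∈ U.support, x ∈ c.support := by
    intro x hx
    rw [hU, Walk.mem_support_append_iff] at hx
    rw [hceq, Walk.mem_support_append_iff]
    rcases hx with hx | hx
    · exact Or.inr (Walk.mem_support_iff _ |>.2 (Or.inr hx))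
    · exact Or.inl hx
  have hs₁ : s₁ ∈ U.support := hcsupp _ h₁
  have hs₂ : s₂ ∈ U.support := hcsupp _ h₂
  set W : G.Walk s₁ s₂ := (U.takeUntil s₁ hs₁).reverse.append (U.takeUntil s₂ hs₂) with hW
  refine ⟨W.bypass, W.bypass_isPath, ?_, ?_⟩
  · intro z hz
    have hz' : z ∈ W.edges := W.edges_bypass_subset hz
    rw [hW, Walk.edges_append, List.mem_append, Walk.edges_reverse, List.mem_reverse] at hz'
    refine hUedges z ?_
    rcases hz' with hz' | hz'
    exacts [Walk.edges_takeUntil_subset _ _ hz', Walk.edges_takeUntil_subset _ _ hz']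
  · intro x hx
    have hx' : x ∈ W.support := W.support_bypass_subset hx
    rw [hW, Walk.mem_support_append_iff, Walk.support_reverse, List.mem_reverse] at hx'
    refine hUsupp x ?_
    rcases hx' with hx' | hx'
    exacts [Walk.support_takeUntil_subset _ _ hx', Walk.support_takeUntil_subset _ _ hx']

lemma aux_walk_parity (σ : V → Bool) (hσ : ∀ u v, G.Adj u v → σ u ≠ σ v)
    {a b : V} (p : G.Walk a b) : (σ a = σ b) ↔ Even p.length := by
  induction p with
  | nil => simp
  | @cons u v w h q ih =>
    rw [Walk.length_cons, Nat.even_add_one, ← ih]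
    have := hσ _ _ h
    cases hu : σ u <;> cases hv : σ v <;> cases hw : σ w <;> simp_all

lemma aux_cycle_support_ncard {w : V} {c : G.Walk w w} (hc : c.IsCycle) :
    c.length ≤ {x | x ∈ c.support}.ncard := by
  classical
  have hnd : c.support.tail.Nodup := hc.support_nodup
  have hsub : {x | x ∈ c.support.tail} ⊆ {x | x ∈ c.support} := by
    intro x hx
    exact List.mem_of_mem_tail hx
  have h1 : {x | x ∈ c.support.tail}.ncard = c.length := by
    have heq : {x | x ∈ c.support.tail} = ↑c.support.tail.toFinset := by
      ext x; simp
    rw [heq, Set.ncard_coe_finset, List.toFinset_card_of_nodup hnd, List.length_tail,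
      c.length_support]
    omega
  calc c.length = {x | x ∈ c.support.tail}.ncard := h1.symm
    _ ≤ _ := Set.ncard_le_ncard hsub (Set.Finite.subset (List.finite_toSet _) (fun _ h => h))

lemma aux_isGraphCircle_ncard {C : Set (Sym2 V)} (h : IsGraphCircle G C) : 3 ≤ C.ncard := by
  classical
  obtain ⟨u, c, hc, rfl⟩ := h
  have hnd : c.edges.Nodup := hc.edges_nodup
  have heq : {e | e ∈ c.edges} = ↑c.edges.toFinset := by ext z; simp
  rw [heq, Set.ncard_coe_finset, List.toFinset_card_of_nodup hnd, c.length_edges]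
  exact hc.three_le_length

lemma aux_cycleMatroid_singleton_indep {M : Matroid (Sym2 V)} (hM : IsCycleMatroidOf M G)
    {e : Sym2 V} (he : e ∈ M.E) : M.Indep {e} := by
  by_contra hind
  have hdep : M.Dep {e} := ⟨hind, Set.singleton_subset_iff.2 he⟩
  have hcirc : IsCircuitOf M {e} := by
    refine ⟨hdep, fun D hD => ?_⟩
    rw [Set.ssubset_singleton_iff] at hD
    subst hD
    exact M.empty_indep
  have h3 := aux_isGraphCircle_ncard ((hM.2 _).1 hcirc)
  rw [Set.ncard_singleton] at h3
  omega

lemma aux_cycleMatroid_pair_indep {M : Matroid (Sym2 V)} (hM : IsCycleMatroidOf M G)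
    {e f : Sym2 V} (he : e ∈ M.E) (hf : f ∈ M.E) : M.Indep {e, f} := by
  rcases eq_or_ne e f with rfl | hef
  · simpa using aux_cycleMatroid_singleton_indep hM he
  by_contra hind
  have hdep : M.Dep {e, f} := ⟨hind, Set.insert_subset he (Set.singleton_subset_iff.2 hf)⟩
  have hcirc : IsCircuitOf M {e, f} := by
    refine ⟨hdep, fun D hD => ?_⟩
    by_cases heD : e ∈ D
    · by_cases hfD : f ∈ D
      · exact absurd (Set.Subset.antisymm hD.subset
          (Set.insert_subset heD (Set.singleton_subset_iff.2 hfD))) hD.ne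
      · refine (aux_cycleMatroid_singleton_indep hM he).subset (fun x hx => ?_)
        rcases hD.subset hx with rfl | rfl
        · exact rfl
        · exact absurd hx hfD
    · refine (aux_cycleMatroid_singleton_indep hM hf).subset (fun x hx => ?_)
      rcases hD.subset hx with rfl | rfl
      · exact absurd hx heD
      · exact rfl
  have h3 := aux_isGraphCircle_ncard ((hM.2 _).1 hcirc)
  rw [Set.ncard_pair hef] at h3
  omega

lemma aux_chord_dep {MG : Matroid (Sym2 V)} (hMG : IsCycleMatroidOf MG G)
    {w : V} {c : G.Walk w w} (hc : c.IsCycle) {y' : Sym2 V} (hy' : y' ∈ c.edges)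
    {s₁ s₂ : V} (h₁ : s₁ ∈ c.support) (h₂ : s₂ ∈ c.support) (hadj : G.Adj s₁ s₂)
    (he : s(s₁, s₂) ∉ {z | z ∈ c.edges}) {T : Set (Sym2 V)}
    (hT : insert s(s₁, s₂) ({z | z ∈ c.edges} \ {y'}) ⊆ T) : ¬ MG.Indep T := by
  obtain ⟨q, hq, hqe, hqs⟩ := aux_cycle_avoid_walk hc hy' h₂ h₁
  have hcyc : (Walk.cons hadj q).IsCycle := by
    rw [Walk.cons_isCycle_iff]
    exact ⟨hq, fun hmem => he (hqe _ hmem).1⟩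
  intro hind
  have hcircuit : IsCircuitOf MG {z | z ∈ (Walk.cons hadj q).edges} :=
    (hMG.2 _).2 ⟨s₁, _, hcyc, rfl⟩
  refine hcircuit.1.not_indep (hind.subset ?_)
  intro z hz
  rw [Set.mem_setOf_eq, Walk.edges_cons, List.mem_cons] at hz
  rcases hz with rfl | hz
  · exact hT (Set.mem_insert _ _)
  · exact hT (Set.mem_insert_of_mem _ ⟨(hqe _ hz).1, fun h => (hqe _ hz).2 h⟩)

lemma aux_vee_dep {MG : Matroid (Sym2 V)} (hMG : IsCycleMatroidOf MG G)
    {w : V} {c : G.Walk w w} (hc : c.IsCycle) {y' : Sym2 V} (hy' : y' ∈ c.edges)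
    {u s₁ s₂ : V} (hu : u ∉ c.support) (h₁ : s₁ ∈ c.support) (h₂ : s₂ ∈ c.support)
    (hne : s₁ ≠ s₂) (ha₁ : G.Adj u s₁) (ha₂ : G.Adj u s₂)
    (hf1 : s(u, s₁) ∉ {z | z ∈ c.edges}) (hf2 : s(u, s₂) ∉ {z | z ∈ c.edges})
    {T : Set (Sym2 V)}
    (hT : insert s(u, s₁) (insert s(u, s₂) ({z | z ∈ c.edges} \ {y'})) ⊆ T) :
    ¬ MG.Indep T := by
  obtain ⟨q, hq, hqe, hqs⟩ := aux_cycle_avoid_walk hc hy' h₂ h₁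
  have hpath : (Walk.cons ha₂ q).IsPath := by
    rw [Walk.cons_isPath_iff]
    exact ⟨hq, fun hmem => hu (hqs _ hmem)⟩
  have hcyc : (Walk.cons ha₁.symm (Walk.cons ha₂ q)).IsCycle := by
    rw [Walk.cons_isCycle_iff]
    refine ⟨hpath, ?_⟩
    rw [Walk.edges_cons, List.mem_cons]
    rintro (h | h)
    · rcases Sym2.eq_iff.1 h with ⟨h1, h2⟩ | ⟨h1, h2⟩
      · exact hu (h2 ▸ h₂)
      · exact hne h1
    · refine hf1 ?_
      have h' : s(u, s₁) ∈ q.edges := by rwa [Sym2.eq_swap] at h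
      exact (hqe _ h').1
  intro hind
  have hcircuit : IsCircuitOf MG {z | z ∈ (Walk.cons ha₁.symm (Walk.cons ha₂ q)).edges} :=
    (hMG.2 _).2 ⟨s₁, _, hcyc, rfl⟩
  refine hcircuit.1.not_indep (hind.subset ?_)
  intro z hz
  rw [Set.mem_setOf_eq, Walk.edges_cons, Walk.edges_cons, List.mem_cons, List.mem_cons] at hz
  rcases hz with rfl | rfl | hz
  · exact hT (by rw [Sym2.eq_swap]; exact Set.mem_insert _ _)
  · exact hT (Set.mem_insert_of_mem _ (Set.mem_insert _ _))
  · exact hT (Set.mem_insert_of_mem _ (Set.mem_insert_of_mem _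
      ⟨(hqe _ hz).1, fun h => (hqe _ hz).2 h⟩))

lemma aux_mul_le_four {a b : ℕ} (h : a + b ≤ 4) : a * b ≤ 4 := by
  have ha : a ≤ 4 := by omega
  interval_cases a <;> omega

end AuxGraph

section KeyLemma

open Set SimpleGraph

lemma aux_key {V : Type} {G : SimpleGraph V} (σ : V → Bool)
    (hσ : ∀ u v, G.Adj u v → σ u ≠ σ v) (hV : Nat.card V = 8)
    {MG : Matroid (Sym2 V)} (hMG : IsCycleMatroidOf MG G)
    {Y : Set (Sym2 V)} (hY : IsCircuitOf MG Y)
    {M5 : Matroid (Sym2 (Fin 5))} (h5 : IsCycleMatroidOf M5 K5) :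
    ¬ HasMinorIso (mCon MG Y) M5 := by
  classical
  have hfinV : Finite V := Nat.finite_of_card_ne_zero (by omega)
  rintro ⟨M₀, hmin, f, hbij, hind⟩
  obtain ⟨w, c, hc, hYeq⟩ := (hMG.2 Y).1 hY
  subst hYeq
  set Y : Set (Sym2 V) := {z | z ∈ c.edges} with hYdef
  have hYE : Y ⊆ MG.E := hY.1.subset_ground
  have hSsub : M₀.E ⊆ MG.E \ Y := aux_minor_ground hmin
  -- cardinality of the ground set of the minor
  have hE5card : M5.E.ncard = 10 := by
    rw [h5.1]
    have heq : K5.edgeSet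
        = ↑(Finset.univ.filter (fun e : Sym2 (Fin 5) => ¬ e.IsDiag)) := by
      ext e
      induction e using Sym2.ind with
      | _ a b =>
        simp [K5, SimpleGraph.mem_edgeSet, completeGraph, Sym2.isDiag_iff_proj_eq]
    rw [heq, Set.ncard_coe_finset]
    decide
  have h10 : M₀.E.ncard = 10 := by
    rw [← hE5card, ← hbij.image_eq, Set.ncard_image_of_injOn hbij.injOn]
  -- pairwise independence in the contraction
  have hpair : ∀ e ∈ M₀.E, ∀ g ∈ M₀.E, (mCon MG Y).Indep {e, g} := by
    intro e he g hg
    have hsub : {e, g} ⊆ M₀.E := Set.insert_subset he (Set.singleton_subset_iff.2 hg)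
    have h5i : M5.Indep (f '' {e, g}) := by
      rw [Set.image_pair]
      exact aux_cycleMatroid_pair_indep h5 (hbij.mapsTo he) (hbij.mapsTo hg)
    exact aux_minor_indep hmin _ ((hind _ hsub).2 h5i)
  -- the labelling map
  set π : V → Option V := fun v => if v ∈ c.support then none else some v with hπ
  have hπ_in : ∀ v ∈ c.support, π v = none := fun v hv => by simp only [hπ, if_pos hv]
  have hπ_out : ∀ (v : V), v ∉ c.support → π v = some v := fun v hv => by
    simp only [hπ, if_neg hv]
  have hπ_some : ∀ v x : V, π v = some x → v = x ∧ v ∉ c.support := by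
    intro v x h
    by_cases hv : v ∈ c.support
    · rw [hπ_in v hv] at h; simp at h
    · rw [hπ_out v hv] at h
      exact ⟨Option.some.inj h, hv⟩
  set lab : Sym2 V → Sym2 (Option V) := Sym2.map π with hlab
  -- injectivity of the labelling on M₀.E
  have hinj : Set.InjOn lab M₀.E := by
    intro e heS g hgS heq
    by_contra hne
    obtain ⟨J, hJ, hIJ, hIE⟩ := aux_mCon_indep_exists hYE (hpair e heS g hgS)
    have hJne : J ≠ Y := fun h => hY.1.not_indep (h ▸ hJ.indep)
    obtain ⟨y', hy'Y, hy'J⟩ := Set.exists_of_ssubset (ssubset_of_subset_of_ne hJ.subset hJne)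
    have hJeq : J = Y \ {y'} :=
      hJ.eq_of_subset_indep (hY.2 _ (Set.sdiff_singleton_ssubset.2 hy'Y))
        (Set.subset_diff_singleton hJ.subset hy'J) diff_subset
    rw [hJeq] at hIJ
    have hy'c : y' ∈ c.edges := hy'Y
    have heE : e ∈ G.edgeSet := by
      have := hSsub heS; rw [hMG.1] at this; exact this.1
    have heY : e ∉ Y := (hSsub heS).2
    have hgE : g ∈ G.edgeSet := by
      have := hSsub hgS; rw [hMG.1] at this; exact this.1
    have hgY : g ∉ Y := (hSsub hgS).2
    obtain ⟨a₁, a₂, hea⟩ := aux_sym2_exists e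
    obtain ⟨b₁, b₂, hgb⟩ := aux_sym2_exists g
    by_cases hA : a₁ ∈ c.support ∧ a₂ ∈ c.support
    · refine aux_chord_dep hMG hc hy'c hA.1 hA.2 ?_ ?_ ?_ hIJ
      · rw [hea, SimpleGraph.mem_edgeSet] at heE; exact heE
      · rw [← hea]; exact heY
      · rw [← hea]
        exact Set.insert_subset (Set.mem_union_left _ (Set.mem_insert _ _)) subset_union_right
    by_cases hB : b₁ ∈ c.support ∧ b₂ ∈ c.support
    · refine aux_chord_dep hMG hc hy'c hB.1 hB.2 ?_ ?_ ?_ hIJ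
      · rw [hgb, SimpleGraph.mem_edgeSet] at hgE; exact hgE
      · rw [← hgb]; exact hgY
      · rw [← hgb]
        exact Set.insert_subset
          (Set.mem_union_left _ (Set.mem_insert_of_mem _ rfl)) subset_union_right
    -- both e and g have an endpoint outside the support
    obtain ⟨u, x, hu, hex⟩ : ∃ u x, u ∉ c.support ∧ e = s(u, x) := by
      by_cases h : a₁ ∈ c.support
      · exact ⟨a₂, a₁, fun h2 => hA ⟨h, h2⟩, hea.trans Sym2.eq_swap⟩
      · exact ⟨a₁, a₂, h, hea⟩
    obtain ⟨u', x', hu', hgx⟩ : ∃ u' x', u' ∉ c.support ∧ g = s(u', x') := by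
      by_cases h : b₁ ∈ c.support
      · exact ⟨b₂, b₁, fun h2 => hB ⟨h, h2⟩, hgb.trans Sym2.eq_swap⟩
      · exact ⟨b₁, b₂, h, hgb⟩
    have hadj_e : G.Adj u x := by rw [hex, SimpleGraph.mem_edgeSet] at heE; exact heE
    have hadj_g : G.Adj u' x' := by rw [hgx, SimpleGraph.mem_edgeSet] at hgE; exact hgE
    have hleq : s(π u, π x) = s(π u', π x') := by
      have h0 := heq
      rw [hex, hgx, hlab, Sym2.map_pair_eq, Sym2.map_pair_eq] at h0
      exact h0
    rw [hπ_out u hu, hπ_out u' hu'] at hleq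
    rcases Sym2.eq_iff.1 hleq with ⟨h1, h2⟩ | ⟨h1, h2⟩
    · have huu' : u = u' := Option.some.inj h1
      by_cases hx : x ∈ c.support
      · have hx'eq : π x' = none := by rw [← h2, hπ_in x hx]
        have hx' : x' ∈ c.support := by
          by_contra h
          rw [hπ_out _ h] at hx'eq
          simp at hx'eq
        have hxx' : x ≠ x' := by
          rintro rfl
          exact hne (by rw [hex, hgx, huu'])
        refine aux_vee_dep hMG hc hy'c hu hx hx' hxx' hadj_e (huu' ▸ hadj_g) ?_ ?_ ?_ hIJ
        · rw [← hex]; exact heY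
        · rw [huu', ← hgx]; exact hgY
        · rw [← hex, huu', ← hgx]
          refine Set.insert_subset (Set.mem_union_left _ (Set.mem_insert _ _)) ?_
          refine Set.insert_subset
            (Set.mem_union_left _ (Set.mem_insert_of_mem _ rfl)) subset_union_right
      · rw [hπ_out x hx] at h2
        obtain ⟨hxe, -⟩ := hπ_some x' x h2.symm
        exact hne (by rw [hex, hgx, huu', hxe])
    · obtain ⟨h1e, -⟩ := hπ_some x' u h1.symm
      obtain ⟨h2e, -⟩ := hπ_some x u' h2
      exact hne (by rw [hex, hgx, h1e, ← h2e, Sym2.eq_swap])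
  -- counting labels
  set supp : Set V := {x | x ∈ c.support} with hsuppdef
  have hsupp4 : 4 ≤ supp.ncard := by
    have h3 := hc.three_le_length
    have hev : Even c.length := (aux_walk_parity σ hσ c).1 rfl
    have hle : c.length ≤ supp.ncard := aux_cycle_support_ncard hc
    obtain ⟨k, hk⟩ := hev
    omega
  set Xs : Set V := {x | x ∉ c.support} with hXsdef
  have hXs : Xs.ncard ≤ 4 := by
    have hcc := Set.ncard_add_ncard_compl supp
    have hcompl : suppᶜ = Xs := rfl
    rw [hcompl, hV] at hcc
    omega
  set XL : Set V := {v | v ∉ c.support ∧ σ v = true} with hXLdef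
  set XR : Set V := {v | v ∉ c.support ∧ σ v = false} with hXRdef
  have hXLR : XL.ncard + XR.ncard = Xs.ncard := by
    rw [← Set.ncard_union_eq ?_ (Set.toFinite _) (Set.toFinite _)]
    · congr 1
      ext v
      simp only [hXLdef, hXRdef, hXsdef, Set.mem_union, Set.mem_setOf_eq]
      cases h : σ v <;> tauto
    · rw [Set.disjoint_left]
      rintro a ⟨-, h1⟩ ⟨-, h2⟩
      rw [h1] at h2
      exact Bool.noConfusion h2
  have hprod : XL.ncard * XR.ncard ≤ 4 := aux_mul_le_four (by omega)
  set L1 : Set (Sym2 (Option V)) := {s((none : Option V), (none : Option V))} with hL1def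
  set L2 : Set (Sym2 (Option V)) :=
    (fun v : V => s(some v, (none : Option V))) '' Xs with hL2def
  set L3 : Set (Sym2 (Option V)) :=
    (fun p : V × V => s((some p.1 : Option V), (some p.2 : Option V))) '' (XL ×ˢ XR) with hL3def
  have himg : lab '' M₀.E ⊆ L1 ∪ L2 ∪ L3 := by
    rintro z ⟨e, heS, rfl⟩
    obtain ⟨a₁, a₂, rfl⟩ := aux_sym2_exists e
    have hadj : G.Adj a₁ a₂ := by
      have h' := hSsub heS
      rw [hMG.1] at h'
      exact (G.mem_edgeSet).1 h'.1
    rw [hlab, Sym2.map_pair_eq]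
    by_cases h1 : a₁ ∈ c.support <;> by_cases h2 : a₂ ∈ c.support
    · refine Set.mem_union_left _ (Set.mem_union_left _ ?_)
      rw [hπ_in _ h1, hπ_in _ h2]
      rfl
    · refine Set.mem_union_left _ (Set.mem_union_right _ ?_)
      rw [hπ_in _ h1, hπ_out _ h2]
      exact ⟨a₂, h2, Sym2.eq_swap⟩
    · refine Set.mem_union_left _ (Set.mem_union_right _ ?_)
      rw [hπ_out _ h1, hπ_in _ h2]
      exact ⟨a₁, h1, rfl⟩
    · refine Set.mem_union_right _ ?_
      rw [hπ_out _ h1, hπ_out _ h2]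
      have hσne := hσ _ _ hadj
      cases hσ1 : σ a₁
      · refine ⟨(a₂, a₁), ⟨⟨h2, ?_⟩, ⟨h1, hσ1⟩⟩, Sym2.eq_swap⟩
        cases hσ2 : σ a₂
        · rw [hσ1, hσ2] at hσne; exact absurd rfl hσne
        · rfl
      · refine ⟨(a₁, a₂), ⟨⟨h1, hσ1⟩, ⟨h2, ?_⟩⟩, rfl⟩
        cases hσ2 : σ a₂
        · rfl
        · rw [hσ1, hσ2] at hσne; exact absurd rfl hσne
  have hL1c : L1.ncard ≤ 1 := le_of_eq (Set.ncard_singleton _)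
  have hL2c : L2.ncard ≤ 4 := le_trans (Set.ncard_image_le (Set.toFinite _)) hXs
  have hL3c : L3.ncard ≤ 4 := by
    refine le_trans (Set.ncard_image_le (Set.toFinite _)) ?_
    have hpc : (XL ×ˢ XR).ncard = XL.ncard * XR.ncard := by
      rw [← Nat.card_coe_set_eq, ← Nat.card_coe_set_eq, ← Nat.card_coe_set_eq,
        Nat.card_congr (Equiv.Set.prod XL XR), Nat.card_prod]
    rw [hpc]
    exact hprod
  have hfinL : (L1 ∪ L2 ∪ L3).Finite :=
    ((Set.finite_singleton _).union ((Set.toFinite Xs).image _)).union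
      ((Set.toFinite (XL ×ˢ XR)).image _)
  have hcount : (lab '' M₀.E).ncard ≤ 9 := by
    refine le_trans (Set.ncard_le_ncard himg hfinL) ?_
    calc (L1 ∪ L2 ∪ L3).ncard ≤ (L1 ∪ L2).ncard + L3.ncard := Set.ncard_union_le _ _
      _ ≤ L1.ncard + L2.ncard + L3.ncard :=
          Nat.add_le_add_right (Set.ncard_union_le _ _) _
      _ ≤ 9 := by omega
  rw [Set.ncard_image_of_injOn hinj, h10] at hcount
  omega

end KeyLemma

/-- For `G` being `K₃,₅` or `K₄,₄`, and every circuit `Y` of the cycle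
matroid `M(G)`, the contraction `M(G)/Y` has no minor isomorphic to `M(K₅)`. -/
theorem statement_5 {V : Type} (G : SimpleGraph V)
    (hG : Nonempty (G ≃g K35) ∨ Nonempty (G ≃g K44))
    (MG : Matroid (Sym2 V)) (hMG : IsCycleMatroidOf MG G)
    (Y : Set (Sym2 V)) (hY : IsCircuitOf MG Y)
    (M5 : Matroid (Sym2 (Fin 5))) (h5 : IsCycleMatroidOf M5 K5) :
    ¬ HasMinorIso (mCon MG Y) M5 := by
  rcases hG with h | h
  · obtain ⟨ψ⟩ := h
    refine aux_key (fun v => (ψ v).isLeft) ?_ ?_ hMG hY h5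
    · intro u v huv heq
      have hadj : K35.Adj (ψ u) (ψ v) := ψ.map_adj_iff.2 huv
      rcases h1 : ψ u with a | a <;> rcases h2 : ψ v with b | b <;>
        simp_all [K35]
    · rw [Nat.card_congr ψ.toEquiv]
      simp
  · obtain ⟨ψ⟩ := h
    refine aux_key (fun v => (ψ v).isLeft) ?_ ?_ hMG hY h5
    · intro u v huv heq
      have hadj : K44.Adj (ψ u) (ψ v) := ψ.map_adj_iff.2 huv
      rcases h1 : ψ u with a | a <;> rcases h2 : ψ v with b | b <;>
        simp_all [K44]
    · rw [Nat.card_congr ψ.toEquiv]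
      simp
end

section
/- Let G be one of the graphs K_{3,n}, K^{+1}_{3,n}, K^{+2}_{3,n}, K^{+3}_{3,n} with n ≥ 5, let B be the set of vertices of G of degree 3, and let G_e be obtained from G by adding a new edge e between two non-adjacent vertices both lying in B. Then there exists a circle X of G_e such that the contraction G_e/X has a minor isomorphic to K_{3,3}. -/
section Statement8Aux

private lemma s8_reach_mem {V : Type*} {Q : SimpleGraph V} {S : Set V}
    (h : ∀ a b, Q.Adj a b → a ∈ S ∧ b ∈ S) {a b : V} (hr : Q.Reachable a b) :
    a = b ∨ (a ∈ S ∧ b ∈ S) := by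
  obtain ⟨p⟩ := hr
  induction p with
  | nil => exact Or.inl rfl
  | cons hadj p ih =>
    rcases h _ _ hadj with ⟨ha, hc⟩
    rcases ih with rfl | ⟨_, hb⟩
    · exact Or.inr ⟨ha, hc⟩
    · exact Or.inr ⟨ha, hb⟩

private lemma s8_induce_singleton_connected {V : Type*} (G : SimpleGraph V) (x : V) :
    (G.induce {x}).Connected := by
  rw [SimpleGraph.connected_iff]
  refine ⟨fun a b => ?_, ⟨⟨x, rfl⟩⟩⟩
  obtain ⟨a, ha⟩ := a
  obtain ⟨b, hb⟩ := b
  simp only [Set.mem_singleton_iff] at ha hb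
  have : (⟨a, by simp [ha]⟩ : ({x} : Set V)) = ⟨b, by simp [hb]⟩ :=
    Subtype.ext (ha.trans hb.symm)
  exact this ▸ SimpleGraph.Reachable.refl _

private lemma s8_exists_inj3 {α : Type*} {k1 k2 k3 i j : α}
    (h12 : k1 ≠ k2) (h13 : k1 ≠ k3) (h23 : k2 ≠ k3)
    (h1i : k1 ≠ i) (h1j : k1 ≠ j) (h2i : k2 ≠ i) (h2j : k2 ≠ j)
    (h3i : k3 ≠ i) (h3j : k3 ≠ j) :
    ∃ R : Fin 3 → α, Function.Injective R ∧ ∀ b, R b ≠ i ∧ R b ≠ j := by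
  refine ⟨![k1, k2, k3], ?_, ?_⟩
  · intro a b h
    fin_cases a <;> fin_cases b <;> simp_all
  · intro b
    fin_cases b <;> simp_all

private lemma s8_deg_inr (n : ℕ) (hn : 5 ≤ n) (H : SimpleGraph (Fin 3 ⊕ Fin n))
    (hle : K3n n ≤ H) (u : Fin 3 ⊕ Fin n) (hu : vDeg H u = 3) :
    ∃ i, u = Sum.inr i := by
  obtain a | i := u
  · exfalso
    have hsub : Set.range (Sum.inr : Fin n → Fin 3 ⊕ Fin n) ⊆ H.neighborSet (Sum.inl a) := by
      rintro x ⟨b, rfl⟩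
      exact hle (by simp [K3n])
    have h1 : (Set.range (Sum.inr : Fin n → Fin 3 ⊕ Fin n)).ncard = n := by
      rw [← Set.image_univ, Set.ncard_image_of_injective _ Sum.inr_injective,
        Set.ncard_univ, Nat.card_eq_fintype_card, Fintype.card_fin]
    have h2 := Set.ncard_le_ncard hsub (Set.toFinite _)
    rw [h1] at h2
    rw [vDeg] at hu
    omega
  · exact ⟨i, rfl⟩

end Statement8Aux

/-- Adding an edge `e` between two non-adjacent degree-3 vertices of a graph
in `{K₃,ₙ, K₃,ₙ⁺¹, K₃,ₙ⁺², K₃,ₙ⁺³}` (`n ≥ 5`) yields a graph `G_e` having a circle `X`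
such that `G_e/X` has a `K₃,₃`-minor. -/
theorem statement_8 (n : ℕ) (hn : 5 ≤ n)
    (H : SimpleGraph (Fin 3 ⊕ Fin n)) (hH : H ∈ K3nFamily n)
    (u v : Fin 3 ⊕ Fin n) (hu : vDeg H u = 3) (hv : vDeg H v = 3)
    (huv : u ≠ v) (hadj : ¬ H.Adj u v) :
    ∃ X : Set (Sym2 (Fin 3 ⊕ Fin n)),
      IsGraphCircle (H ⊔ SimpleGraph.fromEdgeSet {s(u, v)}) X ∧
      HasGraphMinor (contractGraph (H ⊔ SimpleGraph.fromEdgeSet {s(u, v)}) X) K33 := by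
  have hle : K3n n ≤ H := by
    rcases hH with rfl | rfl | rfl | rfl
    · exact le_rfl
    · exact le_sup_left
    · exact le_sup_left
    · exact le_sup_left
  obtain ⟨i, rfl⟩ := s8_deg_inr n hn H hle u hu
  obtain ⟨j, rfl⟩ := s8_deg_inr n hn H hle v hv
  have hij : i ≠ j := fun h => huv (by rw [h])
  clear hu hv hadj huv
  set G := H ⊔ SimpleGraph.fromEdgeSet {s(Sum.inr i, Sum.inr j)} with hG
  -- the circle: the triangle (inr i, inl 0, inr j)
  have h1 : G.Adj (Sum.inr i) (Sum.inl 0) := Or.inl (hle (by simp [K3n]))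
  have h2 : G.Adj (Sum.inl 0) (Sum.inr j) := Or.inl (hle (by simp [K3n]))
  have h3 : G.Adj (Sum.inr j) (Sum.inr i) := by
    right
    simp [SimpleGraph.fromEdgeSet_adj, Sym2.eq_iff, hij.symm]
  set c : G.Walk (Sum.inr i) (Sum.inr i) :=
    SimpleGraph.Walk.cons h1 (SimpleGraph.Walk.cons h2
      (SimpleGraph.Walk.cons h3 SimpleGraph.Walk.nil)) with hc
  have hcyc : c.IsCycle := by
    rw [SimpleGraph.Walk.isCycle_def]
    refine ⟨⟨?_⟩, ?_, ?_⟩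
    · simp [hc, Sym2.eq_iff, hij, hij.symm]
    · simp [hc]
    · simp [hc, hij, hij.symm]
  refine ⟨{e | e ∈ c.edges}, ⟨_, c, hcyc, rfl⟩, ?_⟩
  set X : Set (Sym2 (Fin 3 ⊕ Fin n)) := {e | e ∈ c.edges} with hXdef
  have hX : X = {s(Sum.inr i, Sum.inl 0), s(Sum.inl 0, Sum.inr j),
      s(Sum.inr j, Sum.inr i)} := by
    ext e
    simp [hXdef, hc]
  clear_value c
  clear hcyc hc hXdef
  -- now the K33 minor of the contraction
  set Q := SimpleGraph.fromEdgeSet X ⊓ G with hQ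
  set S : Set (Fin 3 ⊕ Fin n) := {Sum.inr i, Sum.inl 0, Sum.inr j} with hS
  have hQS : ∀ a b, Q.Adj a b → a ∈ S ∧ b ∈ S := by
    intro a b hab
    have hmem : s(a, b) ∈ X := hab.1.1
    rw [hX] at hmem
    simp only [Set.mem_insert_iff, Set.mem_singleton_iff, Sym2.eq_iff] at hmem
    rcases hmem with (⟨rfl, rfl⟩ | ⟨rfl, rfl⟩) | (⟨rfl, rfl⟩ | ⟨rfl, rfl⟩) |
        (⟨rfl, rfl⟩ | ⟨rfl, rfl⟩) <;> simp [hS]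
  have hdis : ∀ a b : Fin 3 ⊕ Fin n, a ≠ b → b ∉ S →
      Q.connectedComponentMk a ≠ Q.connectedComponentMk b := by
    intro a b hab hbS h
    rcases s8_reach_mem hQS ((SimpleGraph.ConnectedComponent.eq).mp h) with rfl | ⟨_, hb⟩
    · exact hab rfl
    · exact hbS hb
  have : Nonempty (Fin n) := ⟨⟨0, by omega⟩⟩
  obtain ⟨k1, k2, k3, h12, h13, h23, h1i, h1j, h2i, h2j, h3i, h3j⟩ :
      ∃ k1 k2 k3 : Fin n, k1 ≠ k2 ∧ k1 ≠ k3 ∧ k2 ≠ k3 ∧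
        k1 ≠ i ∧ k1 ≠ j ∧ k2 ≠ i ∧ k2 ≠ j ∧ k3 ≠ i ∧ k3 ≠ j := by
    have hcard : 2 < (({i, j}ᶜ : Finset (Fin n))).card := by
      have ha1 : ({i, j} : Finset (Fin n)).card ≤ 2 :=
        (Finset.card_insert_le _ _).trans (by simp)
      have ha2 := Finset.card_compl ({i, j} : Finset (Fin n))
      rw [ha2]
      simp only [Fintype.card_fin]
      omega
    obtain ⟨a, ha, b, hb, cc, hcc, hab, hac, hbc⟩ := Finset.two_lt_card.mp hcard
    simp only [Finset.mem_compl, Finset.mem_insert, Finset.mem_singleton, not_or] at ha hb hcc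
    exact ⟨a, b, cc, hab, hac, hbc, ha.1, ha.2, hb.1, hb.2, hcc.1, hcc.2⟩
  obtain ⟨R, hRinj, hRij⟩ := s8_exists_inj3 h12 h13 h23 h1i h1j h2i h2j h3i h3j
  set rep : Fin 3 ⊕ Fin 3 → Fin 3 ⊕ Fin n :=
    Sum.elim (fun a => Sum.inl a) (fun b => Sum.inr (R b)) with hrep
  have hrepinj : Function.Injective rep := by
    rintro (a | a) (b | b) h
    · simp only [hrep, Sum.elim_inl, Sum.inl.injEq] at h
      exact congrArg Sum.inl h
    · exact absurd h (by simp [hrep])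
    · exact absurd h (by simp [hrep])
    · simp only [hrep, Sum.elim_inr, Sum.inr.injEq] at h
      exact congrArg Sum.inr (hRinj h)
  have hrepS : ∀ w : Fin 3 ⊕ Fin 3, w ≠ Sum.inl 0 → rep w ∉ S := by
    rintro (a | b) hw
    · simp only [hrep, Sum.elim_inl, hS, Set.mem_insert_iff, Set.mem_singleton_iff]
      push_neg
      refine ⟨by simp, ?_, by simp⟩
      simp only [ne_eq, Sum.inl.injEq]
      intro h
      exact hw (by simp [h])
    · simp only [hrep, Sum.elim_inr, hS, Set.mem_insert_iff, Set.mem_singleton_iff]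
      push_neg
      exact ⟨by simp [(hRij b).1], by simp, by simp [(hRij b).2]⟩
  have hcompne : ∀ w1 w2 : Fin 3 ⊕ Fin 3, w1 ≠ w2 →
      Q.connectedComponentMk (rep w1) ≠ Q.connectedComponentMk (rep w2) := by
    intro w1 w2 h
    by_cases hw2 : w2 = Sum.inl 0
    · subst hw2
      exact (hdis _ _ (fun he => h (hrepinj he).symm) (hrepS w1 h)).symm
    · exact hdis _ _ (fun he => h (hrepinj he)) (hrepS w2 hw2)
  refine ⟨fun w => {Q.connectedComponentMk (rep w)}, fun w => ⟨_, rfl⟩,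
    fun w => s8_induce_singleton_connected _ _, ?_, ?_⟩
  · intro w1 w2 h
    simp only [Set.disjoint_singleton]
    exact hcompne w1 w2 h
  · have hadjX : ∀ (a : Fin 3) (k : Fin n), k ≠ i → k ≠ j →
        (contractGraph G X).Adj (Q.connectedComponentMk (Sum.inl a))
          (Q.connectedComponentMk (Sum.inr k)) := by
      intro a k hki hkj
      refine ⟨?_, Or.inl ⟨Sum.inl a, Sum.inr k, Or.inl (hle (by simp [K3n])), ?_, rfl, rfl⟩⟩
      · exact hdis _ _ (by simp) (by simp [hS, hki, hkj])
      · rw [hX]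
        simp [Sym2.eq_iff, hki, hkj]
    rintro (a | a) (b | b) hab
    · simp [K33] at hab
    · exact ⟨_, rfl, _, rfl, hadjX a (R b) (hRij b).1 (hRij b).2⟩
    · exact ⟨_, rfl, _, rfl, (hadjX b (R a) (hRij a).1 (hRij a).2).symm⟩
    · simp [K33] at hab
end

section
/- For every n ≥ 5, every graph H among K_{3,n}, K^{+1}_{3,n}, K^{+2}_{3,n}, K^{+3}_{3,n}, and every circle X of H, the contraction H/X has no minor isomorphic to K_{3,3}; indeed every cycle of H contains at least two vertices of the side A, so H/X has at most two vertices of degree greater than 3. -/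
section Statement11Helpers

open SimpleGraph

variable {V' : Type*} {G : SimpleGraph V'} {u v : V'}

private lemma st11_getVert_eq_getElem_support (p : G.Walk u v) (i : ℕ) (h : i ≤ p.length) :
    p.getVert i = p.support[i]'(by rw [Walk.length_support]; omega) := by
  induction p generalizing i with
  | nil => simp only [Walk.length_nil, Nat.le_zero] at h; subst h; simp
  | cons ha q ih =>
    cases i with
    | zero => simp
    | succ m =>
      simp only [Walk.getVert_cons_succ, Walk.support_cons, List.getElem_cons_succ]
      exact ih m (by simpa using h)

private lemma st11_cycle_getVert_inj {c : G.Walk u u} (hc : c.IsCycle) {i j : ℕ}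
    (hi : 1 ≤ i) (hij : i < j) (hj : j ≤ c.length)
    (h : c.getVert i = c.getVert j) : False := by
  have hn : c.support.tail.Nodup := hc.support_nodup
  have hlen : c.support.tail.length = c.length := by
    simp [Walk.length_support]
  have hi' : i - 1 < c.support.tail.length := by omega
  have hj' : j - 1 < c.support.tail.length := by omega
  have e1 : c.support.tail[i-1] = c.getVert i := by
    rw [List.getElem_tail, st11_getVert_eq_getElem_support c i (by omega)]
    congr 1; omega
  have e2 : c.support.tail[j-1] = c.getVert j := by
    rw [List.getElem_tail, st11_getVert_eq_getElem_support c j (by omega)]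
    congr 1; omega
  have := hn.getElem_inj_iff.mp (e1.trans (h.trans e2.symm))
  omega

private lemma st11_family_le {n : ℕ} {H : SimpleGraph (Fin 3 ⊕ Fin n)} (hH : H ∈ K3nFamily n) :
    H ≤ K3nPlus3 n := by
  have hmono : ∀ s t : Set (Sym2 (Fin 3 ⊕ Fin n)), s ⊆ t →
      K3n n ⊔ SimpleGraph.fromEdgeSet s ≤ K3n n ⊔ SimpleGraph.fromEdgeSet t :=
    fun s t hst => sup_le_sup_left (SimpleGraph.fromEdgeSet_mono hst) _
  rcases hH with h | h | h | h <;> subst h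
  · exact le_sup_left
  · exact hmono _ _ (by intro e he; simp only [Set.mem_singleton_iff] at he; simp [he])
  · refine hmono _ _ ?_
    intro e he
    simp only [Set.mem_insert_iff, Set.mem_singleton_iff] at he
    rcases he with h | h <;> simp [h]
  · exact le_rfl

private lemma st11_adj_left {n : ℕ} {H : SimpleGraph (Fin 3 ⊕ Fin n)} (hH : H ∈ K3nFamily n)
    {a b : Fin 3 ⊕ Fin n} (hab : H.Adj a b) :
    (∃ i, a = Sum.inl i) ∨ (∃ i, b = Sum.inl i) := by
  have h : (K3nPlus3 n).Adj a b := st11_family_le hH hab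
  match a, b with
  | Sum.inl i, _ => exact Or.inl ⟨i, rfl⟩
  | _, Sum.inl i => exact Or.inr ⟨i, rfl⟩
  | Sum.inr x, Sum.inr y =>
    exfalso
    simp only [K3nPlus3, K3n, SimpleGraph.sup_adj, completeBipartiteGraph_adj,
      SimpleGraph.fromEdgeSet_adj, Set.mem_insert_iff, Set.mem_singleton_iff,
      Sym2.eq, Sym2.rel_iff', Prod.mk.injEq, Prod.swap_prod_mk] at h
    simp at h

private lemma st11_two_inl {n : ℕ} {H : SimpleGraph (Fin 3 ⊕ Fin n)} (hH : H ∈ K3nFamily n)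
    {u : Fin 3 ⊕ Fin n} {c : H.Walk u u} (hc : c.IsCycle) :
    ∃ i j : Fin 3, i ≠ j ∧ Sum.inl i ∈ c.support ∧ Sum.inl j ∈ c.support := by
  have hL : 3 ≤ c.length := hc.three_le_length
  have hmem : ∀ k, k ≤ c.length → c.getVert k ∈ c.support := fun k hk =>
    Walk.mem_support_iff_exists_getVert.mpr ⟨k, rfl, hk⟩
  have hpair : ∀ k, k < c.length →
      (∃ i, c.getVert k = Sum.inl i) ∨ (∃ i, c.getVert (k+1) = Sum.inl i) :=
    fun k hk => st11_adj_left hH (c.adj_getVert_succ hk)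
  by_contra hcon
  push_neg at hcon
  obtain ⟨i0, m, hm, hg⟩ : ∃ (i0 : Fin 3) (m : ℕ), m ≤ c.length ∧ c.getVert m = Sum.inl i0 := by
    rcases hpair 0 (by omega) with ⟨i, hi⟩ | ⟨i, hi⟩
    · exact ⟨i, 0, by omega, hi⟩
    · exact ⟨i, 1, by omega, hi⟩
  have huniq : ∀ k, k ≤ c.length → ∀ i, c.getVert k = Sum.inl i → i = i0 := by
    intro k hk i hki
    by_contra hne
    exact hcon i i0 hne (hki ▸ hmem k hk) (hg ▸ hmem m hm)
  have hA : ∀ k, k < c.length → c.getVert k = Sum.inl i0 ∨ c.getVert (k+1) = Sum.inl i0 := by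
    intro k hk
    rcases hpair k hk with ⟨i, hi⟩ | ⟨i, hi⟩
    · exact Or.inl (by rw [hi, huniq k (by omega) i hi])
    · exact Or.inr (by rw [hi, huniq (k+1) (by omega) i hi])
  rcases hA 1 (by omega) with g1 | g2
  · rcases hA 2 (by omega) with g2 | g3
    · exact st11_cycle_getVert_inj hc (by omega) (by omega) (by omega) (g1.trans g2.symm)
    · exact st11_cycle_getVert_inj hc (i := 1) (j := 3) (by omega) (by omega) (by omega)
        (g1.trans g3.symm)
  · rcases hA 0 (by omega) with g0 | g1
    · have gL : c.getVert c.length = Sum.inl i0 := by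
        rw [c.getVert_length, ← c.getVert_zero, g0]
      exact st11_cycle_getVert_inj hc (i := 2) (j := c.length) (by omega) (by omega) (by omega)
        (g2.trans gL.symm)
    · exact st11_cycle_getVert_inj hc (i := 1) (j := 2) (by omega) (by omega) (by omega)
        (g1.trans g2.symm)

private lemma st11_fin3_third :
    ∀ i j : Fin 3, i ≠ j → ∃ k : Fin 3, ∀ l : Fin 3, l = i ∨ l = j ∨ l = k := by
  decide

private lemma st11_cover {n : ℕ} {H : SimpleGraph (Fin 3 ⊕ Fin n)} (hH : H ∈ K3nFamily n)
    {X : Set (Sym2 (Fin 3 ⊕ Fin n))} (hX : IsGraphCircle H X) :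
    ∃ x y : (SimpleGraph.fromEdgeSet X ⊓ H).ConnectedComponent,
      ∀ l : Fin 3, (SimpleGraph.fromEdgeSet X ⊓ H).connectedComponentMk (Sum.inl l) = x ∨
        (SimpleGraph.fromEdgeSet X ⊓ H).connectedComponentMk (Sum.inl l) = y := by
  classical
  obtain ⟨u, c, hc, hXe⟩ := hX
  set G' := SimpleGraph.fromEdgeSet X ⊓ H with hG'
  have he : ∀ e ∈ c.edges, e ∈ G'.edgeSet := by
    intro e hee
    rw [hG', SimpleGraph.edgeSet_inf, SimpleGraph.edgeSet_fromEdgeSet]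
    have h1 : e ∈ H.edgeSet := c.edges_subset_edgeSet hee
    exact ⟨⟨hXe ▸ hee, fun hd => (SimpleGraph.not_isDiag_of_mem_edgeSet H h1) hd⟩, h1⟩
  set c' := c.transfer G' he with hc'
  have hsupp : c'.support = c.support := Walk.support_transfer c he
  obtain ⟨i, j, hij, hi, hj⟩ := st11_two_inl hH hc
  have hreach : ∀ w, w ∈ c.support →
      G'.connectedComponentMk w = G'.connectedComponentMk u := by
    intro w hw
    have hw' : w ∈ c'.support := by rw [hsupp]; exact hw
    exact SimpleGraph.ConnectedComponent.sound ⟨(c'.takeUntil w hw').reverse⟩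
  have hijeq : G'.connectedComponentMk (Sum.inl i) = G'.connectedComponentMk (Sum.inl j) :=
    (hreach _ hi).trans (hreach _ hj).symm
  obtain ⟨k, hk⟩ := st11_fin3_third i j hij
  refine ⟨G'.connectedComponentMk (Sum.inl i), G'.connectedComponentMk (Sum.inl k), fun l => ?_⟩
  rcases hk l with h | h | h
  · exact Or.inl (by rw [h])
  · exact Or.inl (by rw [h, ← hijeq])
  · exact Or.inr (by rw [h])

private lemma st11_hit {n : ℕ} {H : SimpleGraph (Fin 3 ⊕ Fin n)} (hH : H ∈ K3nFamily n)
    {X : Set (Sym2 (Fin 3 ⊕ Fin n))}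
    {x y : (SimpleGraph.fromEdgeSet X ⊓ H).ConnectedComponent}
    (hcov : ∀ l : Fin 3,
      (SimpleGraph.fromEdgeSet X ⊓ H).connectedComponentMk (Sum.inl l) = x ∨
      (SimpleGraph.fromEdgeSet X ⊓ H).connectedComponentMk (Sum.inl l) = y)
    {a b : (SimpleGraph.fromEdgeSet X ⊓ H).ConnectedComponent}
    (hab : (contractGraph H X).Adj a b) :
    a = x ∨ a = y ∨ b = x ∨ b = y := by
  rw [contractGraph, SimpleGraph.fromRel_adj] at hab
  obtain ⟨-, hr | hr⟩ := hab
  · obtain ⟨u, v, huv, -, hau, hbv⟩ := hr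
    rcases st11_adj_left hH huv with ⟨l, hl⟩ | ⟨l, hl⟩
    · subst hl
      rcases hcov l with h | h
      · exact Or.inl (hau.trans h)
      · exact Or.inr (Or.inl (hau.trans h))
    · subst hl
      rcases hcov l with h | h
      · exact Or.inr (Or.inr (Or.inl (hbv.trans h)))
      · exact Or.inr (Or.inr (Or.inr (hbv.trans h)))
  · obtain ⟨u, v, huv, -, hbu, hav⟩ := hr
    rcases st11_adj_left hH huv with ⟨l, hl⟩ | ⟨l, hl⟩
    · subst hl
      rcases hcov l with h | h
      · exact Or.inr (Or.inr (Or.inl (hbu.trans h)))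
      · exact Or.inr (Or.inr (Or.inr (hbu.trans h)))
    · subst hl
      rcases hcov l with h | h
      · exact Or.inl (hav.trans h)
      · exact Or.inr (Or.inl (hav.trans h))

private lemma st11_avoid {β : Type*} (φ : Fin 3 → Set β)
    (hdisj : ∀ i j : Fin 3, i ≠ j → Disjoint (φ i) (φ j)) (x y : β) :
    ∃ i, x ∉ φ i ∧ y ∉ φ i := by
  by_contra hcon
  push_neg at hcon
  by_cases h0 : x ∈ φ 0
  · have h1 : y ∈ φ 1 := hcon 1 (Set.disjoint_left.mp (hdisj 0 1 (by decide)) h0)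
    have h2 : y ∈ φ 2 := hcon 2 (Set.disjoint_left.mp (hdisj 0 2 (by decide)) h0)
    exact Set.disjoint_left.mp (hdisj 1 2 (by decide)) h1 h2
  · have hy0 : y ∈ φ 0 := hcon 0 h0
    by_cases h1 : x ∈ φ 1
    · have h2 : y ∈ φ 2 := hcon 2 (Set.disjoint_left.mp (hdisj 1 2 (by decide)) h1)
      exact Set.disjoint_left.mp (hdisj 0 2 (by decide)) hy0 h2
    · have hy1 : y ∈ φ 1 := hcon 1 h1
      exact Set.disjoint_left.mp (hdisj 0 1 (by decide)) hy0 hy1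

end Statement11Helpers

/-- For every `n ≥ 5`, every `H` in `{K₃,ₙ, K₃,ₙ⁺¹, K₃,ₙ⁺², K₃,ₙ⁺³}` and
every circle `X` of `H`, the contraction `H/X` has no `K₃,₃`-minor; indeed every cycle of
`H` contains at least two vertices of the side `A`, so `H/X` has at most two vertices of
degree greater than `3`. -/
theorem statement_11 (n : ℕ) (hn : 5 ≤ n)
    (H : SimpleGraph (Fin 3 ⊕ Fin n)) (hH : H ∈ K3nFamily n)
    (X : Set (Sym2 (Fin 3 ⊕ Fin n))) (hX : IsGraphCircle H X) :
    (∀ (u : Fin 3 ⊕ Fin n) (c : H.Walk u u), c.IsCycle →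
      2 ≤ {w | w ∈ c.support ∧
            w ∈ Set.range (Sum.inl : Fin 3 → Fin 3 ⊕ Fin n)}.ncard) ∧
    {w | 3 < vDeg (contractGraph H X) w}.ncard ≤ 2 ∧
    ¬ HasGraphMinor (contractGraph H X) K33 := by
  obtain ⟨x, y, hcov⟩ := st11_cover hH hX
  have hfin2 : ({x, y} :
      Set (SimpleGraph.fromEdgeSet X ⊓ H).ConnectedComponent).Finite :=
    (Set.finite_singleton y).insert x
  have hcard2 : ({x, y} :
      Set (SimpleGraph.fromEdgeSet X ⊓ H).ConnectedComponent).ncard ≤ 2 :=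
    le_trans (Set.ncard_insert_le x {y}) (by simp)
  refine ⟨?_, ?_, ?_⟩
  · -- every cycle has at least two vertices on the left side
    intro u c hc
    obtain ⟨i, j, hij, hi, hj⟩ := st11_two_inl hH hc
    have h2 : 1 < {w | w ∈ c.support ∧
        w ∈ Set.range (Sum.inl : Fin 3 → Fin 3 ⊕ Fin n)}.ncard := by
      rw [Set.one_lt_ncard_iff (Set.toFinite _)]
      exact ⟨Sum.inl i, Sum.inl j, ⟨hi, ⟨i, rfl⟩⟩, ⟨hj, ⟨j, rfl⟩⟩,
        fun h => hij (Sum.inl.inj h)⟩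
    omega
  · -- at most two vertices of degree greater than 3
    have hsub : {w | 3 < vDeg (contractGraph H X) w} ⊆ {x, y} := by
      intro w hw
      by_contra hwxy
      simp only [Set.mem_insert_iff, Set.mem_singleton_iff, not_or] at hwxy
      have hnb : (contractGraph H X).neighborSet w ⊆ {x, y} := by
        intro z hz
        rcases st11_hit hH hcov hz with h | h | h | h
        · exact absurd h hwxy.1
        · exact absurd h hwxy.2
        · exact Or.inl h
        · exact Or.inr h
      have hle : vDeg (contractGraph H X) w ≤ 2 :=
        le_trans (Set.ncard_le_ncard hnb hfin2) hcard2
      simp only [Set.mem_setOf_eq] at hw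
      omega
    exact le_trans (Set.ncard_le_ncard hsub hfin2) hcard2
  · -- no K33 minor
    rintro ⟨φ, hne, hconn, hdisj, hadj⟩
    obtain ⟨iL, hxL, hyL⟩ := st11_avoid (fun i => φ (Sum.inl i))
      (fun i j hij => hdisj (fun h => hij (Sum.inl.inj h))) x y
    obtain ⟨iR, hxR, hyR⟩ := st11_avoid (fun i => φ (Sum.inr i))
      (fun i j hij => hdisj (fun h => hij (Sum.inr.inj h))) x y
    have hK : K33.Adj (Sum.inl iL) (Sum.inr iR) := by
      simp [K33]
    obtain ⟨v₁, hv₁, v₂, hv₂, hv₁₂⟩ := hadj hK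
    rcases st11_hit hH hcov hv₁₂ with h | h | h | h
    · exact hxL (h ▸ hv₁)
    · exact hyL (h ▸ hv₁)
    · exact hxR (h ▸ hv₂)
    · exact hyR (h ▸ hv₂)
end
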